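/- Let 1 ≤ j ≤ k ≤ dim E. There exists a constant C > 1, depending only on j, k and dim E (in particular independent of U), such that for every j-dimensional subspace U ⊆ E and every k-dimensional subspace L ⊆ E one has (1/C)·d(L, Gr_k(E)_U)² ≤ |P_U − P_U P_L|² ≤ C·d(L, Gr_k(E)_U)², where d(L, Gr_k(E)_U) := inf{ |P_L − P_{L'}| : L' ∈ Gr_k(E), U ⊆ L' }. -/

import Mathlib

open Module Submodule

noncomputable section

variable {E : Type*} [NormedAddCommGroup E] [InnerProductSpace ℝ E] [FiniteDimensional ℝ E]

/-- The orthogonal projection onto a subspace `U`, viewed as a continuous linear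
endomorphism of `E`. -/
noncomputable def projCLM (U : Submodule ℝ E) : E →L[ℝ] E :=
  U.subtypeL.comp (orthogonalProjection U)

/-- The gap `δ(U,V) := ‖P_U - P_V ∘ P_U‖` between two subspaces. -/
noncomputable def gap (U V : Submodule ℝ E) : ℝ :=
  ‖projCLM U - (projCLM V).comp (projCLM U)‖

/-- The orthogonal projection onto `U` as a linear endomorphism of `E`. -/
noncomputable def projL (U : Submodule ℝ E) : E →ₗ[ℝ] E :=
  (projCLM U).toLinearMap

/-- The Frobenius norm `|A| = √tr(A A*)` of a linear endomorphism. -/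
noncomputable def frobNorm (A : E →ₗ[ℝ] E) : ℝ :=
  Real.sqrt (LinearMap.trace ℝ E (A ∘ₗ LinearMap.adjoint A))

namespace FrobAux

local notation "⟪" x ", " y "⟫" => @inner ℝ _ _ x y

lemma projL_apply (V : Submodule ℝ E) (x : E) :
    projL V x = (orthogonalProjection V x : E) := rfl

lemma projL_mem (V : Submodule ℝ E) (x : E) : projL V x ∈ V :=
  (orthogonalProjection V x).2

lemma projL_apply_mem (V : Submodule ℝ E) {x : E} (hx : x ∈ V) : projL V x = x := by
  rw [projL_apply]; exact (V.starProjection_eq_self_iff (v := x)).mpr hx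

lemma projL_adjoint (V : Submodule ℝ E) : LinearMap.adjoint (projL V) = projL V := by
  symm
  rw [LinearMap.eq_adjoint_iff]
  intro x y
  exact V.inner_starProjection_left_eq_right x y

lemma projL_idem (V : Submodule ℝ E) : projL V * projL V = projL V := by
  ext x
  exact projL_apply_mem V (projL_mem V x)

lemma projL_mul_of_le {V W : Submodule ℝ E} (h : V ≤ W) :
    projL W * projL V = projL V := by
  ext x
  exact projL_apply_mem W (h (projL_mem V x))

lemma mul_projL_of_le {V W : Submodule ℝ E} (h : V ≤ W) :
    projL V * projL W = projL V := by
  have h2 := congrArg LinearMap.adjoint (projL_mul_of_le h)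
  rwa [Module.End.mul_eq_comp, LinearMap.adjoint_comp, projL_adjoint, projL_adjoint,
    ← Module.End.mul_eq_comp] at h2

lemma trace_eq_sum_inner {ι : Type*} [Fintype ι] [DecidableEq ι]
    (b : OrthonormalBasis ι ℝ E) (f : E →ₗ[ℝ] E) :
    LinearMap.trace ℝ E f = ∑ i, ⟪f (b i), b i⟫ := by
  rw [LinearMap.trace_eq_matrix_trace ℝ b.toBasis]
  rw [Matrix.trace]
  congr 1
  ext i
  rw [Matrix.diag_apply, LinearMap.toMatrix_apply, b.coe_toBasis_repr_apply,
    b.repr_apply_apply, b.coe_toBasis, real_inner_comm]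

lemma trace_comp_adjoint_nonneg (f : E →ₗ[ℝ] E) :
    0 ≤ LinearMap.trace ℝ E (f ∘ₗ LinearMap.adjoint f) := by
  classical
  rw [trace_eq_sum_inner (stdOrthonormalBasis ℝ E)]
  refine Finset.sum_nonneg fun i _ => ?_
  rw [LinearMap.comp_apply, ← LinearMap.adjoint_inner_right]
  exact real_inner_self_nonneg

lemma frobNorm_sq (f : E →ₗ[ℝ] E) :
    frobNorm f ^ 2 = LinearMap.trace ℝ E (f ∘ₗ LinearMap.adjoint f) := by
  rw [frobNorm, Real.sq_sqrt (trace_comp_adjoint_nonneg f)]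

lemma frobNorm_nonneg (f : E →ₗ[ℝ] E) : 0 ≤ frobNorm f := Real.sqrt_nonneg _

lemma trace_projL (V : Submodule ℝ E) :
    LinearMap.trace ℝ E (projL V) = (finrank ℝ V : ℝ) := by
  have h : LinearMap.IsProj V (projL V) :=
    ⟨projL_mem V, fun x hx => projL_apply_mem V hx⟩
  exact h.trace

/-- `|P_U − P_U P_L|² = dim U − tr(P_L P_U)` -/
lemma frob_A_sq (U L : Submodule ℝ E) :
    frobNorm (projL U - projL U ∘ₗ projL L) ^ 2
      = (finrank ℝ U : ℝ) - LinearMap.trace ℝ E (projL L * projL U) := by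
  set P := projL U with hPdef
  set Q := projL L with hQdef
  have hP : P * P = P := projL_idem U
  have hQ : Q * Q = Q := projL_idem L
  have hadj : LinearMap.adjoint (P - P ∘ₗ Q) = P - Q * P := by
    rw [map_sub, LinearMap.adjoint_comp, projL_adjoint, projL_adjoint]; rfl
  rw [frobNorm_sq, hadj]
  have hcomp : (P - P ∘ₗ Q) ∘ₗ (P - Q * P) = P - P * Q * P := by
    rw [← Module.End.mul_eq_comp, ← Module.End.mul_eq_comp]
    have : (P - P * Q) * (P - Q * P)
        = P * P - P * (Q * P) - (P * Q * P - P * Q * (Q * P)) := by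
      noncomm_ring
    rw [this, hP]
    have h2 : P * Q * (Q * P) = P * Q * P := by
      rw [show P * Q * (Q * P) = P * (Q * Q) * P by noncomm_ring, hQ]
    rw [h2]
    noncomm_ring
  rw [hcomp, map_sub, trace_projL]
  congr 1
  calc LinearMap.trace ℝ E (P * Q * P) = LinearMap.trace ℝ E (P * (P * Q)) := by
        rw [LinearMap.trace_mul_comm]
    _ = LinearMap.trace ℝ E (Q * P) := by
        rw [show P * (P * Q) = P * P * Q by noncomm_ring, hP, LinearMap.trace_mul_comm]

/-- `|P_L − P_{L'}|² = dim L + dim L' − 2 tr(P_L P_{L'})` -/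
lemma frob_B_sq (L L' : Submodule ℝ E) :
    frobNorm (projL L - projL L') ^ 2
      = (finrank ℝ L : ℝ) + (finrank ℝ L' : ℝ)
        - 2 * LinearMap.trace ℝ E (projL L * projL L') := by
  set Q := projL L
  set R := projL L'
  have hQ : Q * Q = Q := projL_idem L
  have hR : R * R = R := projL_idem L'
  have hadj : LinearMap.adjoint (Q - R) = Q - R := by
    rw [map_sub, projL_adjoint, projL_adjoint]
  rw [frobNorm_sq, hadj]
  have hcomp : (Q - R) ∘ₗ (Q - R) = Q + R - (Q * R + R * Q) := by
    rw [← Module.End.mul_eq_comp]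
    have : (Q - R) * (Q - R) = Q * Q + R * R - (Q * R + R * Q) := by noncomm_ring
    rw [this, hQ, hR]
  rw [hcomp, map_sub, map_add, map_add, trace_projL, trace_projL,
    LinearMap.trace_mul_comm (R := ℝ) R Q]
  ring

/-- For any `L' ⊇ U`, `|P_U − P_U P_L| ≤ |P_L − P_{L'}|` in the squared sense. -/
lemma frob_A_le_B {U L L' : Submodule ℝ E} (h : U ≤ L') :
    frobNorm (projL U - projL U ∘ₗ projL L) ^ 2
      ≤ frobNorm (projL L - projL L') ^ 2 := by
  set P := projL U
  set Q := projL L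
  set R := projL L'
  have hP : P * P = P := projL_idem U
  have hRP : R * P = P := projL_mul_of_le h
  set B : E →ₗ[ℝ] E := Q - R with hBdef
  have hBadj : LinearMap.adjoint B = B := by
    rw [hBdef, map_sub, projL_adjoint, projL_adjoint]
  -- A = P − P∘Q = −(P*B), A* = −(B*P)
  have hAadj : LinearMap.adjoint (P - P ∘ₗ Q) = -(B * P) := by
    have h1 : LinearMap.adjoint (P - P ∘ₗ Q) = P - Q * P := by
      rw [map_sub, LinearMap.adjoint_comp, projL_adjoint, projL_adjoint]; rfl
    rw [h1, hBdef, show (Q - R) * P = Q * P - R * P from by noncomm_ring, hRP]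
    noncomm_ring
  have hA : P - P ∘ₗ Q = -(P * B) := by
    have := congrArg LinearMap.adjoint hAadj
    rwa [LinearMap.adjoint_adjoint, map_neg, Module.End.mul_eq_comp,
      LinearMap.adjoint_comp, projL_adjoint, hBadj, ← Module.End.mul_eq_comp] at this
  -- |A|² = tr(B*B*P)   (after trace gymnastics)
  have htrA : frobNorm (P - P ∘ₗ Q) ^ 2 = LinearMap.trace ℝ E (B * B * P) := by
    rw [frobNorm_sq, hAadj, hA]
    have h1 : (-(P * B)) ∘ₗ (-(B * P)) = P * (B * B) * P := by
      rw [← Module.End.mul_eq_comp]; noncomm_ring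
    rw [h1]
    calc LinearMap.trace ℝ E (P * (B * B) * P)
        = LinearMap.trace ℝ E (P * (P * (B * B))) := by rw [LinearMap.trace_mul_comm]
      _ = LinearMap.trace ℝ E (B * B * P) := by
          rw [show P * (P * (B * B)) = P * P * (B * B) by noncomm_ring, hP,
            LinearMap.trace_mul_comm]
  -- |B|² = tr(B*B)
  have htrB : frobNorm B ^ 2 = LinearMap.trace ℝ E (B * B) := by
    rw [frobNorm_sq, hBadj, ← Module.End.mul_eq_comp]
  -- difference is tr(C C*) ≥ 0 with C = B − B*P
  set C : E →ₗ[ℝ] E := B - B * P with hCdef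
  have hCadj : LinearMap.adjoint C = B - P * B := by
    rw [hCdef, map_sub, hBadj, Module.End.mul_eq_comp, LinearMap.adjoint_comp,
      projL_adjoint, hBadj, ← Module.End.mul_eq_comp]
  have hCC : C ∘ₗ LinearMap.adjoint C = B * B - B * P * B := by
    rw [hCadj, hCdef, ← Module.End.mul_eq_comp]
    have : (B - B * P) * (B - P * B)
        = B * B - B * (P * B) - (B * P * B - B * (P * P) * B) := by noncomm_ring
    rw [this, hP]
    noncomm_ring
  have hnn : 0 ≤ LinearMap.trace ℝ E (B * B) - LinearMap.trace ℝ E (B * P * B) := by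
    have h0 := trace_comp_adjoint_nonneg C
    rwa [hCC, map_sub] at h0
  have htr3 : LinearMap.trace ℝ E (B * P * B) = LinearMap.trace ℝ E (B * B * P) := by
    rw [LinearMap.trace_mul_comm]
    rw [show B * (B * P) = B * B * P by noncomm_ring]
  rw [htrA, htrB]
  rw [htr3] at hnn
  linarith

end FrobAux

open FrobAux in
/-- Let `1 ≤ j ≤ k ≤ dim E`.  There is a constant `C > 1`, depending only on `j`, `k` and
`dim E` (in particular independent of `U`), such that for every `j`-dimensional subspace
`U` and every `k`-dimensional subspace `L`,
`(1/C)·d(L, Gr_k(E)_U)² ≤ |P_U − P_U P_L|² ≤ C·d(L, Gr_k(E)_U)²`, where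
`d(L, Gr_k(E)_U) = inf { |P_L − P_{L'}| : dim L' = k, U ⊆ L' }`. -/
theorem frob_dist_comparable (n j k : ℕ) (hj : 1 ≤ j) (hjk : j ≤ k) (hk : k ≤ n) :
    ∃ C : ℝ, 1 < C ∧
      ∀ (E : Type*) [NormedAddCommGroup E] [InnerProductSpace ℝ E] [FiniteDimensional ℝ E],
        finrank ℝ E = n →
        ∀ (U L : Submodule ℝ E), finrank ℝ U = j → finrank ℝ L = k →
          (1 / C) * (sInf {r : ℝ | ∃ L' : Submodule ℝ E,
                finrank ℝ L' = k ∧ U ≤ L' ∧ r = frobNorm (projL L - projL L')}) ^ 2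
              ≤ (frobNorm (projL U - projL U ∘ₗ projL L)) ^ 2 ∧
            (frobNorm (projL U - projL U ∘ₗ projL L)) ^ 2
              ≤ C * (sInf {r : ℝ | ∃ L' : Submodule ℝ E,
                finrank ℝ L' = k ∧ U ≤ L' ∧ r = frobNorm (projL L - projL L')}) ^ 2 := by
  refine ⟨2, one_lt_two, ?_⟩
  intro E _ _ _ hE U L hU hL
  classical
  set S : Set ℝ := {r : ℝ | ∃ L' : Submodule ℝ E,
    finrank ℝ L' = k ∧ U ≤ L' ∧ r = frobNorm (projL L - projL L')} with hSdef
  -- construct the good subspace L₀ = U ⊔ M, M ≤ L ⊓ Uᗮ of dimension k - j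
  have hWdim : k - j ≤ finrank ℝ ↥(L ⊓ Uᗮ) := by
    have h1 := Submodule.finrank_sup_add_finrank_inf_eq L Uᗮ
    have h2 : finrank ℝ ↥(L ⊔ Uᗮ) ≤ n := hE ▸ Submodule.finrank_le _
    have h3 : finrank ℝ U + finrank ℝ Uᗮ = n := hE ▸ Submodule.finrank_add_finrank_orthogonal U
    omega
  obtain ⟨f, hf⟩ := exists_linearIndependent_of_le_finrank (R := ℝ) (M := ↥(L ⊓ Uᗮ)) hWdim
  set g : Fin (k - j) → E := fun i => ((f i : E)) with hgdef
  have hg : LinearIndependent ℝ g := hf.map' (L ⊓ Uᗮ).subtype (Submodule.ker_subtype _)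
  set M : Submodule ℝ E := span ℝ (Set.range g) with hMdef
  have hMW : M ≤ L ⊓ Uᗮ := by
    rw [hMdef, span_le]
    rintro x ⟨i, rfl⟩
    exact (f i).2
  have hML : M ≤ L := hMW.trans inf_le_left
  have hMU : M ≤ Uᗮ := hMW.trans inf_le_right
  have hMdim : finrank ℝ M = k - j := by
    rw [hMdef, finrank_span_eq_card hg, Fintype.card_fin]
  set L₀ : Submodule ℝ E := U ⊔ M with hL₀def
  have hUL₀ : U ≤ L₀ := le_sup_left
  have hML₀ : M ≤ L₀ := le_sup_right
  have hinf : U ⊓ M = ⊥ := ((U.orthogonal_disjoint.mono_right hMU).eq_bot)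
  have hL₀dim : finrank ℝ L₀ = k := by
    have h1 := Submodule.finrank_sup_add_finrank_inf_eq U M
    rw [hinf, finrank_bot, hU, hMdim] at h1
    rw [hL₀def]
    omega
  -- P_{L₀} = P_U + P_M
  have hsplit : projL L₀ = projL U + projL M := by
    apply LinearMap.ext
    intro x
    have hv : projL U x + projL M x ∈ L₀ :=
      add_mem (hUL₀ (projL_mem U x)) (hML₀ (projL_mem M x))
    have hz : x - (projL U x + projL M x) ∈ L₀ᗮ := by
      have hzU : x - (projL U x + projL M x) ∈ Uᗮ := by
        have h1 : x - projL U x ∈ Uᗮ := Submodule.sub_starProjection_mem_orthogonal (K := U) x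
        have h2 : projL M x ∈ Uᗮ := hMU (projL_mem M x)
        have : x - (projL U x + projL M x) = (x - projL U x) - projL M x := by abel
        rw [this]
        exact sub_mem h1 h2
      have hzM : x - (projL U x + projL M x) ∈ Mᗮ := by
        have h1 : x - projL M x ∈ Mᗮ := Submodule.sub_starProjection_mem_orthogonal (K := M) x
        have h2 : projL U x ∈ Mᗮ := by
          have hUM : U ≤ Mᗮ :=
            le_trans (Submodule.le_orthogonal_orthogonal U) (Submodule.orthogonal_le hMU)
          exact hUM (projL_mem U x)
        have : x - (projL U x + projL M x) = (x - projL M x) - projL U x := by abel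
        rw [this]
        exact sub_mem h1 h2
      rw [hL₀def]
      intro y hy
      rw [Submodule.mem_sup] at hy
      obtain ⟨a, ha, b, hb, rfl⟩ := hy
      rw [inner_add_left]
      rw [Submodule.mem_orthogonal] at hzU hzM
      rw [hzU a ha, hzM b hb, add_zero]
    have := Submodule.eq_starProjection_of_mem_orthogonal' (K := L₀) (u := x) hv hz (by abel)
    rw [LinearMap.add_apply]; exact this
  -- exact identity: |P_L − P_{L₀}|² = 2 |P_U − P_U P_L|²
  have hexact : frobNorm (projL L - projL L₀) ^ 2
      = 2 * frobNorm (projL U - projL U ∘ₗ projL L) ^ 2 := by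
    rw [frob_B_sq, frob_A_sq, hL, hU, hL₀dim, hsplit, mul_add, map_add]
    have hQM : projL L * projL M = projL M := projL_mul_of_le hML
    rw [hQM, trace_projL, hMdim]
    have : ((k : ℝ) - (j : ℝ)) = ((k - j : ℕ) : ℝ) := by
      rw [Nat.cast_sub hjk]
    rw [← this]
    ring
  -- S is nonempty, bounded below, and frobNorm A is a lower bound
  have hmem : frobNorm (projL L - projL L₀) ∈ S := ⟨L₀, hL₀dim, hUL₀, rfl⟩
  have hSne : S.Nonempty := ⟨_, hmem⟩
  have hlb : ∀ r ∈ S, frobNorm (projL U - projL U ∘ₗ projL L) ≤ r := by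
    rintro r ⟨L', hL'dim, hUL', rfl⟩
    have h := frob_A_le_B (L := L) hUL'
    have h1 : 0 ≤ frobNorm (projL U - projL U ∘ₗ projL L) := frobNorm_nonneg _
    have h2 : 0 ≤ frobNorm (projL L - projL L') := frobNorm_nonneg _
    nlinarith
  have hAle : frobNorm (projL U - projL U ∘ₗ projL L) ≤ sInf S := le_csInf hSne hlb
  have hbdd : BddBelow S := ⟨0, by rintro r ⟨L', _, _, rfl⟩; exact frobNorm_nonneg _⟩
  have hInfle : sInf S ≤ frobNorm (projL L - projL L₀) := csInf_le hbdd hmem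
  have hInf0 : 0 ≤ sInf S := le_csInf hSne (by rintro r ⟨L', _, _, rfl⟩; exact frobNorm_nonneg _)
  have hA0 : 0 ≤ frobNorm (projL U - projL U ∘ₗ projL L) := frobNorm_nonneg _
  constructor
  · -- (1/2) (sInf S)² ≤ |A|²
    have h1 : sInf S ^ 2 ≤ frobNorm (projL L - projL L₀) ^ 2 := by nlinarith
    rw [hexact] at h1
    linarith
  · -- |A|² ≤ 2 (sInf S)²
    have h1 : frobNorm (projL U - projL U ∘ₗ projL L) ^ 2 ≤ sInf S ^ 2 := by nlinarith
    nlinarith [sq_nonneg (sInf S)]
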